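/- Let γ be a modulus function, A ⊆ ℝ Lebesgue measurable, and x ∈ ℝ. Then x is a γ-density point of A (i.e., lim_{α→0⁺} γ(|(x−α,x+α) ∩ Aᶜ|)/γ(2α) = 0) if and only if x is both a left γ-density point (lim_{α→0⁺} γ(|(x−α,x) ∩ Aᶜ|)/γ(α) = 0) and a right γ-density point (lim_{α→0⁺} γ(|(x,x+α) ∩ Aᶜ|)/γ(α) = 0) of A. -/

import Mathlib

open MeasureTheory Set Filter Topology

/-- γ is a modulus function (on [0,∞); values and hypotheses only matter for nonnegative arguments). -/
def IsModulus (γ : ℝ → ℝ) : Prop :=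
  (∀ a, 0 ≤ a → 0 ≤ γ a) ∧
  (∀ a, 0 ≤ a → (γ a = 0 ↔ a = 0)) ∧
  (∀ a b, 0 ≤ a → 0 ≤ b → γ (a + b) ≤ γ a + γ b) ∧
  ContinuousWithinAt γ (Set.Ici 0) 0 ∧
  (∀ a b, 0 ≤ a → a ≤ b → γ a ≤ γ b)

/-- |(x-α, x+α) ∩ Aᶜ| -/
noncomputable def mInt (A : Set ℝ) (x α : ℝ) : ℝ :=
  (volume (Set.Ioo (x - α) (x + α) ∩ Aᶜ)).toReal

/-- x is a γ-density point of A. -/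
def IsGammaDensityPt (γ : ℝ → ℝ) (A : Set ℝ) (x : ℝ) : Prop :=
  Tendsto (fun α => γ (mInt A x α) / γ (2 * α)) (𝓝[>] (0:ℝ)) (𝓝 0)

/-- x is a Lebesgue density point of A. -/
def IsLebDensityPt (A : Set ℝ) (x : ℝ) : Prop :=
  Tendsto (fun α => mInt A x α / (2 * α)) (𝓝[>] (0:ℝ)) (𝓝 0)

lemma vol_inter_ne_top (a b : ℝ) (S : Set ℝ) : volume (Set.Ioo a b ∩ S) ≠ ⊤ :=
  ((measure_mono Set.inter_subset_left).trans_lt measure_Ioo_lt_top).ne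

theorem stmt2 (γ : ℝ → ℝ) (hγ : IsModulus γ) (A : Set ℝ) (hA : MeasurableSet A) (x : ℝ) :
    IsGammaDensityPt γ A x ↔
      (Tendsto (fun α => γ ((volume (Set.Ioo (x - α) x ∩ Aᶜ)).toReal) / γ α)
          (𝓝[>] (0:ℝ)) (𝓝 0) ∧
       Tendsto (fun α => γ ((volume (Set.Ioo x (x + α) ∩ Aᶜ)).toReal) / γ α)
          (𝓝[>] (0:ℝ)) (𝓝 0)) := by
  obtain ⟨hpos, hzero, hsub, _hcont, hmono⟩ := hγ
  have hγpos : ∀ a : ℝ, 0 < a → 0 < γ a := by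
    intro a ha
    exact lt_of_le_of_ne (hpos a ha.le) (fun h => ha.ne' ((hzero a ha.le).mp h.symm))
  set L : ℝ → ℝ := fun α => (volume (Set.Ioo (x - α) x ∩ Aᶜ)).toReal with hLdef
  set R : ℝ → ℝ := fun α => (volume (Set.Ioo x (x + α) ∩ Aᶜ)).toReal with hRdef
  have hLnn : ∀ α, 0 ≤ L α := fun α => ENNReal.toReal_nonneg
  have hRnn : ∀ α, 0 ≤ R α := fun α => ENNReal.toReal_nonneg
  have hMnn : ∀ α, 0 ≤ mInt A x α := fun α => ENNReal.toReal_nonneg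
  -- L α ≤ mInt, R α ≤ mInt, for α > 0
  have hLM : ∀ α : ℝ, 0 < α → L α ≤ mInt A x α := by
    intro α hα
    refine ENNReal.toReal_le_toReal (vol_inter_ne_top _ _ _) (vol_inter_ne_top _ _ _) |>.mpr ?_
    exact measure_mono (Set.inter_subset_inter_left _ (Set.Ioo_subset_Ioo le_rfl (by linarith)))
  have hRM : ∀ α : ℝ, 0 < α → R α ≤ mInt A x α := by
    intro α hα
    refine ENNReal.toReal_le_toReal (vol_inter_ne_top _ _ _) (vol_inter_ne_top _ _ _) |>.mpr ?_
    exact measure_mono (Set.inter_subset_inter_left _ (Set.Ioo_subset_Ioo (by linarith) le_rfl))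
  -- mInt ≤ L + R
  have hMLR : ∀ α : ℝ, mInt A x α ≤ L α + R α := by
    intro α
    have hsubset : Set.Ioo (x - α) (x + α) ∩ Aᶜ ⊆
        (Set.Ioo (x - α) x ∩ Aᶜ) ∪ ({x} ∪ (Set.Ioo x (x + α) ∩ Aᶜ)) := by
      rintro y ⟨⟨h1, h2⟩, hyA⟩
      rcases lt_trichotomy y x with h | h | h
      · exact Or.inl ⟨⟨h1, h⟩, hyA⟩
      · exact Or.inr (Or.inl h)
      · exact Or.inr (Or.inr ⟨⟨h, h2⟩, hyA⟩)
    have hvol : volume (Set.Ioo (x - α) (x + α) ∩ Aᶜ) ≤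
        volume (Set.Ioo (x - α) x ∩ Aᶜ) + volume (Set.Ioo x (x + α) ∩ Aᶜ) := by
      calc volume (Set.Ioo (x - α) (x + α) ∩ Aᶜ)
          ≤ volume ((Set.Ioo (x - α) x ∩ Aᶜ) ∪ ({x} ∪ (Set.Ioo x (x + α) ∩ Aᶜ))) :=
            measure_mono hsubset
        _ ≤ volume (Set.Ioo (x - α) x ∩ Aᶜ) + volume ({x} ∪ (Set.Ioo x (x + α) ∩ Aᶜ)) :=
            measure_union_le _ _
        _ ≤ volume (Set.Ioo (x - α) x ∩ Aᶜ) +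
              (volume ({x} : Set ℝ) + volume (Set.Ioo x (x + α) ∩ Aᶜ)) :=
            add_le_add le_rfl (measure_union_le _ _)
        _ = volume (Set.Ioo (x - α) x ∩ Aᶜ) + volume (Set.Ioo x (x + α) ∩ Aᶜ) := by
            simp
    have := ENNReal.toReal_le_toReal (vol_inter_ne_top _ _ _)
      (ENNReal.add_ne_top.mpr ⟨vol_inter_ne_top _ _ _, vol_inter_ne_top _ _ _⟩) |>.mpr hvol
    rw [ENNReal.toReal_add (vol_inter_ne_top _ _ _) (vol_inter_ne_top _ _ _)] at this
    exact this
  constructor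
  · -- forward: γ-density ⇒ left and right
    intro h
    have h2 : Tendsto (fun α => 2 * (γ (mInt A x α) / γ (2 * α))) (𝓝[>] (0:ℝ)) (𝓝 0) := by
      simpa using h.const_mul 2
    have key : ∀ (F : ℝ → ℝ), (∀ α, 0 ≤ F α) → (∀ α : ℝ, 0 < α → F α ≤ mInt A x α) →
        Tendsto (fun α => γ (F α) / γ α) (𝓝[>] (0:ℝ)) (𝓝 0) := by
      intro F hFnn hFM
      refine tendsto_of_tendsto_of_tendsto_of_le_of_le' tendsto_const_nhds h2 ?_ ?_
      · filter_upwards [self_mem_nhdsWithin] with α (hα : 0 < α)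
        exact div_nonneg (hpos _ (hFnn α)) (hpos _ (by positivity))
      · filter_upwards [self_mem_nhdsWithin] with α (hα : 0 < α)
        have hγα : 0 < γ α := hγpos α hα
        have hγ2α : 0 < γ (2 * α) := hγpos _ (by positivity)
        have h1 : γ (F α) ≤ γ (mInt A x α) := hmono _ _ (hFnn α) (hFM α hα)
        have h2' : γ (2 * α) ≤ 2 * γ α := by
          have := hsub α α hα.le hα.le
          calc γ (2 * α) = γ (α + α) := by ring_nf
            _ ≤ γ α + γ α := this
            _ = 2 * γ α := by ring
        have hMγnn : 0 ≤ γ (mInt A x α) := hpos _ (hMnn α)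
        rw [div_le_iff₀ hγα]
        rw [mul_comm 2 (γ (mInt A x α) / γ (2 * α)), div_mul_eq_mul_div, div_mul_eq_mul_div,
          le_div_iff₀ hγ2α]
        calc γ (F α) * γ (2 * α) ≤ γ (mInt A x α) * (2 * γ α) :=
              mul_le_mul h1 h2' (le_of_lt hγ2α) hMγnn
          _ = γ (mInt A x α) * 2 * γ α := by ring
    exact ⟨key L hLnn hLM, key R hRnn hRM⟩
  · -- backward
    rintro ⟨hL, hR⟩
    have hsum : Tendsto (fun α => γ (L α) / γ α + γ (R α) / γ α) (𝓝[>] (0:ℝ)) (𝓝 0) := by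
      simpa using hL.add hR
    refine tendsto_of_tendsto_of_tendsto_of_le_of_le' tendsto_const_nhds hsum ?_ ?_
    · filter_upwards [self_mem_nhdsWithin] with α (hα : 0 < α)
      exact div_nonneg (hpos _ (hMnn α)) (hpos _ (by positivity))
    · filter_upwards [self_mem_nhdsWithin] with α (hα : 0 < α)
      have hγα : 0 < γ α := hγpos α hα
      have hγ2α : 0 < γ (2 * α) := hγpos _ (by positivity)
      have hα2 : γ α ≤ γ (2 * α) := hmono _ _ hα.le (by linarith)
      have h1 : γ (mInt A x α) ≤ γ (L α) + γ (R α) := by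
        calc γ (mInt A x α) ≤ γ (L α + R α) :=
              hmono _ _ (hMnn α) (hMLR α)
          _ ≤ γ (L α) + γ (R α) := hsub _ _ (hLnn α) (hRnn α)
      calc γ (mInt A x α) / γ (2 * α) ≤ γ (mInt A x α) / γ α :=
            div_le_div_of_nonneg_left (hpos _ (hMnn α)) hγα hα2
        _ ≤ (γ (L α) + γ (R α)) / γ α := by gcongr
        _ = γ (L α) / γ α + γ (R α) / γ α := add_div _ _ _
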